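/- For every positive integer n, (1/n)·S_{1/2}(n) = (1/2)·(1 − (1/n)·(1 + Σ_{j=1}^{⌊log₂ n⌋} τ(n/2^j))), where τ(x) = dist(x, ℤ). -/

import Mathlib

open scoped BigOperators

/-- distance from `x` to the nearest integer -/
noncomputable def tau (x : ℝ) : ℝ := |x - round x|

/-- q-weighted binary digit sum: `s_q(n) = Σ ω_i q^(i+1)` -/
noncomputable def sdigq (q : ℝ) (n : ℕ) : ℝ :=
  ∑ i ∈ Finset.range n, if n.testBit i then q ^ (i + 1) else 0

/-- `S_q(n) = Σ_{k<n} s_q(k)` -/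
noncomputable def Sdigq (q : ℝ) (n : ℕ) : ℝ := ∑ k ∈ Finset.range n, sdigq q k

/-- Takagi–Landsberg function -/
noncomputable def Ta (a x : ℝ) : ℝ := ∑' n : ℕ, a ^ n * tau (2 ^ n * x)

lemma tau_eq_min (x : ℝ) : tau x = min (Int.fract x) (1 - Int.fract x) := by
  rw [tau, abs_sub_round_eq_min]

lemma tau_of_le_half {x : ℝ} (h0 : 0 ≤ x) (h1 : x ≤ 1/2) : tau x = x := by
  rw [tau_eq_min, Int.fract_eq_self.2 ⟨h0, by linarith⟩]
  exact min_eq_left (by linarith)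

lemma tau_of_half_le {x : ℝ} (h0 : 1/2 ≤ x) (h1 : x < 1) : tau x = 1 - x := by
  rw [tau_eq_min, Int.fract_eq_self.2 ⟨by linarith, h1⟩]
  exact min_eq_right (by linarith)

lemma tau_add_one (x : ℝ) : tau (x + 1) = tau x := by
  rw [tau, show (1:ℝ) = ((1:ℤ):ℝ) by norm_num, round_add_intCast, tau]
  push_cast
  ring_nf

lemma sum_low_zero (i m : ℕ) (hm : m ≤ 2^i) :
    (∑ k ∈ Finset.range m, if k.testBit i then (1:ℝ) else 0) = 0 :=
  Finset.sum_eq_zero (fun k hk => by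
    rw [Nat.testBit_lt_two_pow (lt_of_lt_of_le (Finset.mem_range.1 hk) hm)]
    simp)

lemma sum_high_one (i m : ℕ) (hm : m ≤ 2^i) :
    (∑ k ∈ Finset.range m, if (2^i + k).testBit i then (1:ℝ) else 0) = m := by
  have : ∀ k ∈ Finset.range m, (if (2^i + k).testBit i then (1:ℝ) else 0) = 1 := by
    intro k hk
    rw [Nat.testBit_two_pow_add_eq,
      Nat.testBit_lt_two_pow (lt_of_lt_of_le (Finset.mem_range.1 hk) hm)]
    norm_num
  rw [Finset.sum_congr rfl this, Finset.sum_const, Finset.card_range, nsmul_eq_mul, mul_one]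

lemma count_bit (i : ℕ) (n : ℕ) :
    (∑ k ∈ Finset.range n, if k.testBit i then (1:ℝ) else 0)
      = n/2 - 2^i * tau ((n:ℝ) / 2^(i+1)) := by
  induction n using Nat.strong_induction_on with
  | _ n ih =>
    rcases lt_or_ge n (2^(i+1)) with hlt | hge
    · rcases le_or_gt n (2^i) with hle | hgt
      · -- n ≤ 2^i : all bits i are false
        rw [sum_low_zero i n hle]
        have hx0 : (0:ℝ) ≤ (n:ℝ)/2^(i+1) := by positivity
        have hx1 : (n:ℝ)/2^(i+1) ≤ 1/2 := by
          rw [div_le_iff₀ (by positivity), pow_succ]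
          have : (n:ℝ) ≤ 2^i := by exact_mod_cast hle
          linarith
        rw [tau_of_le_half hx0 hx1, pow_succ]
        field_simp
        ring
      · -- 2^i < n < 2^(i+1)
        have hm : n - 2^i ≤ 2^i := by
          have h2 : (2:ℕ)^(i+1) = 2^i + 2^i := by rw [pow_succ]; ring
          omega
        have hn' : n = 2^i + (n - 2^i) := by omega
        rw [hn', Finset.sum_range_add, sum_low_zero i (2^i) le_rfl,
          sum_high_one i (n - 2^i) hm]
        have hx0 : 1/2 ≤ ((2^i + (n - 2^i) : ℕ):ℝ)/2^(i+1) := by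
          rw [le_div_iff₀ (by positivity), pow_succ]
          have : (2:ℝ)^i ≤ ((2^i + (n - 2^i) : ℕ):ℝ) := by
            push_cast; linarith [Nat.cast_nonneg (α := ℝ) (n - 2^i)]
          linarith
        have hx1 : ((2^i + (n - 2^i) : ℕ):ℝ)/2^(i+1) < 1 := by
          rw [div_lt_one (by positivity), ← hn']
          exact_mod_cast hlt
        rw [tau_of_half_le hx0 hx1]
        push_cast
        rw [pow_succ]
        field_simp
        ring
    · -- n ≥ 2^(i+1) : peel off a full block
      have hm : n - 2^(i+1) < n := by
        have : 0 < 2^(i+1) := Nat.pow_pos (by norm_num)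
        omega
      have hn' : n = 2^(i+1) + (n - 2^(i+1)) := by omega
      rw [hn', Finset.sum_range_add]
      have hsecond : (∑ k ∈ Finset.range (n - 2^(i+1)),
          if (2^(i+1) + k).testBit i then (1:ℝ) else 0)
          = ((n - 2^(i+1) : ℕ):ℝ)/2 - 2^i * tau (((n - 2^(i+1) : ℕ):ℝ) / 2^(i+1)) := by
        have : ∀ k ∈ Finset.range (n - 2^(i+1)),
            (if (2^(i+1) + k).testBit i then (1:ℝ) else 0)
              = (if k.testBit i then (1:ℝ) else 0) := by
          intro k _
          rw [Nat.testBit_two_pow_add_gt (Nat.lt_succ_self i)]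
        rw [Finset.sum_congr rfl this, ih _ hm]
      have hfirst : (∑ k ∈ Finset.range (2^(i+1)), if k.testBit i then (1:ℝ) else 0)
          = 2^i := by
        have h2 : (2:ℕ)^(i+1) = 2^i + 2^i := by rw [pow_succ]; ring
        rw [h2, Finset.sum_range_add, sum_low_zero i (2^i) le_rfl,
          sum_high_one i (2^i) le_rfl]
        push_cast; ring
      rw [hfirst, hsecond]
      have htau : tau (((2^(i+1) + (n - 2^(i+1)) : ℕ):ℝ)/2^(i+1))
          = tau (((n - 2^(i+1) : ℕ):ℝ)/2^(i+1)) := by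
        have h : ((2^(i+1) + (n - 2^(i+1)) : ℕ):ℝ)/2^(i+1)
            = ((n - 2^(i+1) : ℕ):ℝ)/2^(i+1) + 1 := by
          push_cast
          field_simp
          ring
        rw [h, tau_add_one]
      rw [htau]
      push_cast
      ring

lemma sdigq_eq (q : ℝ) (m k : ℕ) (hk : k < 2^m) :
    sdigq q k = ∑ i ∈ Finset.range m, if k.testBit i then q ^ (i + 1) else 0 := by
  unfold sdigq
  have h1 : (∑ i ∈ Finset.range k, if k.testBit i then q ^ (i + 1) else 0)
      = ∑ i ∈ Finset.range (max k m), if k.testBit i then q ^ (i + 1) else 0 := by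
    apply Finset.sum_subset (Finset.range_subset_range.2 (le_max_left _ _))
    intro i _ hi
    rw [Finset.mem_range, not_lt] at hi
    rw [Nat.testBit_lt_two_pow (lt_of_lt_of_le (Nat.lt_two_pow_self (n := k))
      (Nat.pow_le_pow_right (by norm_num) hi))]
    simp
  have h2 : (∑ i ∈ Finset.range m, if k.testBit i then q ^ (i + 1) else 0)
      = ∑ i ∈ Finset.range (max k m), if k.testBit i then q ^ (i + 1) else 0 := by
    apply Finset.sum_subset (Finset.range_subset_range.2 (le_max_right _ _))
    intro i _ hi
    rw [Finset.mem_range, not_lt] at hi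
    rw [Nat.testBit_lt_two_pow (lt_of_lt_of_le hk
      (Nat.pow_le_pow_right (by norm_num) hi))]
    simp
  rw [h1, h2]

theorem Sq_half_van_der_Corput (n : ℕ) (hn : 0 < n) :
    (1 / (n : ℝ)) * Sdigq (1/2) n =
      (1 / 2) * (1 - (1 / (n : ℝ)) *
        (1 + ∑ j ∈ Finset.Icc 1 (Nat.log 2 n), tau ((n : ℝ) / 2 ^ j))) := by
  set L := Nat.log 2 n with hL
  have hnpow : n < 2^(L+1) := Nat.lt_pow_succ_log_self (by norm_num) n
  have hpowle : 2^L ≤ n := Nat.pow_log_le_self 2 hn.ne'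
  have hS : Sdigq (1/2) n
      = ((n:ℝ) - 1 - ∑ j ∈ Finset.Icc 1 L, tau ((n : ℝ) / 2 ^ j)) / 2 := by
    have step1 : Sdigq (1/2) n = ∑ i ∈ Finset.range (L+1),
        (1/2:ℝ)^(i+1) * ((n:ℝ)/2 - 2^i * tau ((n:ℝ) / 2^(i+1))) := by
      unfold Sdigq
      rw [Finset.sum_congr rfl (fun k hk =>
        sdigq_eq (1/2) (L+1) k ((Finset.mem_range.1 hk).trans hnpow))]
      rw [Finset.sum_comm]
      refine Finset.sum_congr rfl (fun i _ => ?_)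
      rw [← count_bit i n, Finset.mul_sum]
      refine Finset.sum_congr rfl (fun k _ => ?_)
      split_ifs <;> ring
    rw [step1]
    have expand : ∀ i ∈ Finset.range (L+1),
        (1/2:ℝ)^(i+1) * ((n:ℝ)/2 - 2^i * tau ((n:ℝ) / 2^(i+1)))
          = (n:ℝ)/4 * (1/2:ℝ)^i - (1/2) * tau ((n:ℝ) / 2^(i+1)) := by
      intro i _
      have h : (1/2:ℝ)^(i+1) * 2^i = 1/2 := by
        rw [pow_succ, show ((1:ℝ)/2)^i = (2:ℝ)⁻¹^i by norm_num, inv_pow]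
        field_simp
      calc (1/2:ℝ)^(i+1) * ((n:ℝ)/2 - 2^i * tau ((n:ℝ) / 2^(i+1)))
          = (n:ℝ)/2 * ((1/2:ℝ)^i * (1/2)) - ((1/2:ℝ)^(i+1) * 2^i) * tau ((n:ℝ) / 2^(i+1)) := by
            rw [pow_succ]; ring
        _ = (n:ℝ)/4 * (1/2:ℝ)^i - (1/2) * tau ((n:ℝ) / 2^(i+1)) := by rw [h]; ring
    rw [Finset.sum_congr rfl expand, Finset.sum_sub_distrib, ← Finset.mul_sum, ← Finset.mul_sum]
    have hgeom : (∑ i ∈ Finset.range (L+1), (1/2:ℝ)^i) = 2 - 2 * (1/2:ℝ)^(L+1) := by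
      rw [geom_sum_eq (by norm_num)]
      field_simp
      ring
    rw [hgeom]
    have hreindex : (∑ i ∈ Finset.range (L+1), tau ((n:ℝ) / 2^(i+1)))
        = ∑ j ∈ Finset.Icc 1 (L+1), tau ((n:ℝ) / 2^j) := by
      rw [show Finset.Icc 1 (L+1) = Finset.Ico 1 (L+2) by rfl, Finset.sum_Ico_eq_sum_range]
      refine Finset.sum_congr rfl (fun i _ => ?_)
      rw [add_comm 1 i]
    rw [hreindex, Finset.sum_Icc_succ_top (Nat.le_add_left 1 L)]
    have hlast : tau ((n:ℝ) / 2^(L+1)) = 1 - (n:ℝ)/2^(L+1) := by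
      apply tau_of_half_le
      · rw [le_div_iff₀ (by positivity), pow_succ]
        have : (2:ℝ)^L ≤ (n:ℝ) := by exact_mod_cast hpowle
        linarith
      · rw [div_lt_one (by positivity)]
        exact_mod_cast hnpow
    rw [hlast]
    have hp : ((1:ℝ)/2)^(L+1) = 1 / 2^(L+1) := by
      rw [div_pow]; norm_num
    rw [hp]
    have h2 : (2:ℝ)^(L+1) ≠ 0 := by positivity
    field_simp
    ring
  rw [hS]
  have hn' : (n:ℝ) ≠ 0 := Nat.cast_ne_zero.2 hn.ne'
  field_simp
  ring
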